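/- Let B be a nonempty set of permutations, each of which is sum indecomposable. Then the set Av^I(B) of involutions avoiding every element of B has a proper growth rate: the limit lim_{n→∞} |Av^I_n(B)|^{1/n} exists and is finite. -/

import Mathlib

/-- `π` contains the pattern `σ`. -/
def Contains {n k : ℕ} (π : Equiv.Perm (Fin n)) (σ : Equiv.Perm (Fin k)) : Prop :=
  ∃ f : Fin k → Fin n, StrictMono f ∧ ∀ i j : Fin k, σ i < σ j ↔ π (f i) < π (f j)

def IsInvolution {n : ℕ} (π : Equiv.Perm (Fin n)) : Prop := π⁻¹ = π

/-- direct sum of permutations -/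
def directSum {m n : ℕ} (σ : Equiv.Perm (Fin m)) (τ : Equiv.Perm (Fin n)) :
    Equiv.Perm (Fin (m + n)) :=
  finSumFinEquiv.symm.trans ((Equiv.sumCongr σ τ).trans finSumFinEquiv)

/-- skew sum of permutations -/
def skewSum {m n : ℕ} (σ : Equiv.Perm (Fin m)) (τ : Equiv.Perm (Fin n)) :
    Equiv.Perm (Fin (m + n)) :=
  finSumFinEquiv.symm.trans ((Equiv.sumCongr σ τ).trans
    ((Equiv.sumComm (Fin m) (Fin n)).trans (finSumFinEquiv.trans (finCongr (Nat.add_comm n m)))))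

def SumDecomposable {n : ℕ} (π : Equiv.Perm (Fin n)) : Prop :=
  ∃ (a b : ℕ) (h : a + b = n), 0 < a ∧ 0 < b ∧
    ∃ (σ : Equiv.Perm (Fin a)) (τ : Equiv.Perm (Fin b)),
      π = (finCongr h).permCongr (directSum σ τ)

def SkewDecomposable {n : ℕ} (π : Equiv.Perm (Fin n)) : Prop :=
  ∃ (a b : ℕ) (h : a + b = n), 0 < a ∧ 0 < b ∧
    ∃ (σ : Equiv.Perm (Fin a)) (τ : Equiv.Perm (Fin b)),
      π = (finCongr h).permCongr (skewSum σ τ)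

/-- a set of contiguous indices/values -/
def SetContiguous {n : ℕ} (S : Set (Fin n)) : Prop :=
  ∀ ⦃i j k : Fin n⦄, i ∈ S → j ∈ S → i ≤ k → k ≤ j → k ∈ S

/-- an interval of the permutation `π` -/
def IsPermInterval {n : ℕ} (π : Equiv.Perm (Fin n)) (S : Set (Fin n)) : Prop :=
  SetContiguous S ∧ SetContiguous (π '' S)

/-- A permutation of length at least 2 is simple if all its intervals are trivial. -/
def IsSimple {n : ℕ} (π : Equiv.Perm (Fin n)) : Prop :=
  2 ≤ n ∧ ∀ S : Set (Fin n), IsPermInterval π S → S.ncard ≤ 1 ∨ S = Set.univ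

-- patterns (0-indexed one-line notation)
noncomputable def p123 : Equiv.Perm (Fin 3) := Equiv.ofBijective ![0, 1, 2] (by decide)
noncomputable def p132 : Equiv.Perm (Fin 3) := Equiv.ofBijective ![0, 2, 1] (by decide)
noncomputable def p213 : Equiv.Perm (Fin 3) := Equiv.ofBijective ![1, 0, 2] (by decide)
noncomputable def p1324 : Equiv.Perm (Fin 4) := Equiv.ofBijective ![0, 2, 1, 3] (by decide)
noncomputable def p1234 : Equiv.Perm (Fin 4) := Equiv.ofBijective ![0, 1, 2, 3] (by decide)
noncomputable def p1342 : Equiv.Perm (Fin 4) := Equiv.ofBijective ![0, 2, 3, 1] (by decide)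
noncomputable def p1423 : Equiv.Perm (Fin 4) := Equiv.ofBijective ![0, 3, 1, 2] (by decide)
noncomputable def p2341 : Equiv.Perm (Fin 4) := Equiv.ofBijective ![1, 2, 3, 0] (by decide)
noncomputable def p2413 : Equiv.Perm (Fin 4) := Equiv.ofBijective ![1, 3, 0, 2] (by decide)
noncomputable def p5274163 : Equiv.Perm (Fin 7) := Equiv.ofBijective ![4, 1, 6, 3, 0, 5, 2] (by decide)

-- the order-respecting equivalence between a lexicographic sigma of Fins and a Fin
noncomputable def finSigmaOrderEquiv {m : ℕ} (k : Fin m → ℕ) :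
    (Σₗ i : Fin m, Fin (k i)) ≃o Fin (∑ i, k i) :=
  (monoEquivOfFin (Σₗ i : Fin m, Fin (k i)) (by
    rw [Fintype.card_congr (ofLex : _ ≃ (Σ i : Fin m, Fin (k i)))]
    simp)).symm

/-- the inflation `σ[α 0, …, α (m-1)]` -/
noncomputable def inflation {m : ℕ} (σ : Equiv.Perm (Fin m)) (k : Fin m → ℕ)
    (α : ∀ i, Equiv.Perm (Fin (k i))) : Equiv.Perm (Fin (∑ i, k i)) :=
  ((finSigmaOrderEquiv k).toEquiv.symm.trans
    ((ofLex : (Σₗ i : Fin m, Fin (k i)) ≃ (Σ i : Fin m, Fin (k i))).trans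
      ((Equiv.sigmaCongr σ fun i =>
          (α i).trans (finCongr (congrArg k (σ.symm_apply_apply i).symm))).trans
        ((toLex : (Σ t : Fin m, Fin (k (σ.symm t))) ≃ (Σₗ t : Fin m, Fin (k (σ.symm t)))).trans
          ((finSigmaOrderEquiv fun t => k (σ.symm t)).toEquiv.trans
            (finCongr (Equiv.sum_comp σ.symm k)))))))

noncomputable def avICount {b : ℕ} (β : Equiv.Perm (Fin b)) (n : ℕ) : ℕ :=
  Nat.card {π : Equiv.Perm (Fin n) // IsInvolution π ∧ ¬ Contains π β}

noncomputable def avCount {b : ℕ} (β : Equiv.Perm (Fin b)) (n : ℕ) : ℕ :=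
  Nat.card {π : Equiv.Perm (Fin n) // ¬ Contains π β}

noncomputable def avICountSet (B : Set ((k : ℕ) × Equiv.Perm (Fin k))) (n : ℕ) : ℕ :=
  Nat.card {π : Equiv.Perm (Fin n) // IsInvolution π ∧ ∀ β ∈ B, ¬ Contains π β.2}


open Finset

attribute [local instance] Classical.propDecidable

namespace AvGR

/-- matrix (as finite set of cells) contains the pattern of permutation `Q` -/
def MContains {k n : ℕ} (Q : Equiv.Perm (Fin k)) (S : Finset (Fin n × Fin n)) : Prop :=
  ∃ f g : Fin k → Fin n, StrictMono f ∧ StrictMono g ∧ ∀ i, (f i, g (Q i)) ∈ S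

lemma mContains_swap {k n : ℕ} {Q : Equiv.Perm (Fin k)} {S : Finset (Fin n × Fin n)}
    (h : MContains Q S) : MContains Q⁻¹ (S.image Prod.swap) := by
  obtain ⟨f, g, hf, hg, hm⟩ := h
  refine ⟨g, f, hg, hf, fun j => Finset.mem_image.2 ⟨(f (Q⁻¹ j), g (Q (Q⁻¹ j))), ?_, ?_⟩⟩
  · simpa using hm (Q⁻¹ j)
  · simp [Prod.swap]

lemma image_swap_swap {n : ℕ} (S : Finset (Fin n × Fin n)) :
    (S.image Prod.swap).image Prod.swap = S := by
  rw [Finset.image_image]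
  simp

/-- padding map -/
def castPair {n n' : ℕ} (h : n ≤ n') (p : Fin n × Fin n) : Fin n' × Fin n' :=
  (Fin.castLE h p.1, Fin.castLE h p.2)

lemma castPair_injective {n n' : ℕ} (h : n ≤ n') : Function.Injective (castPair h) := by
  intro p q hpq
  have h1 := congrArg Prod.fst hpq
  have h2 := congrArg Prod.snd hpq
  simp only [castPair] at h1 h2
  exact Prod.ext (Fin.castLE_injective h h1) (Fin.castLE_injective h h2)

lemma mContains_of_image_castLE {k n n' : ℕ} {Q : Equiv.Perm (Fin k)} (h : n ≤ n')
    {S : Finset (Fin n × Fin n)} (hc : MContains Q (S.image (castPair h))) : MContains Q S := by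
  obtain ⟨f, g, hf, hg, hm⟩ := hc
  have H : ∀ i : Fin k, ∃ p, p ∈ S ∧ Fin.castLE h p.1 = f i ∧ Fin.castLE h p.2 = g (Q i) := by
    intro i
    obtain ⟨p, hp, hpe⟩ := Finset.mem_image.1 (hm i)
    exact ⟨p, hp, congrArg Prod.fst hpe, congrArg Prod.snd hpe⟩
  choose p hpS h1 h2 using H
  refine ⟨fun i => (p i).1, fun j => (p (Q⁻¹ j)).2, ?_, ?_, ?_⟩
  · intro i i' hii
    have : (f i : ℕ) < f i' := hf hii
    rw [← h1, ← h1] at this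
    exact this
  · intro j j' hjj
    have : (g (Q (Q⁻¹ j)) : ℕ) < g (Q (Q⁻¹ j')) := by
      simpa using hg hjj
    rw [← h2, ← h2] at this
    exact this
  · intro i
    simp only [show Q⁻¹ (Q i) = i from Q.symm_apply_apply i]
    exact hpS i

/-- block index of a coordinate, for blocks of side `s` -/
def bIdx {s m : ℕ} (r : Fin (s * m)) : Fin m :=
  ⟨(r : ℕ) / s, Nat.div_lt_of_lt_mul (by simpa [Nat.mul_comm] using r.2)⟩

lemma lt_of_bIdx_lt {s m : ℕ} {a b : Fin (s * m)} (h : bIdx a < bIdx b) : a < b := by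
  by_contra hab
  push_neg at hab
  exact absurd (Nat.div_le_div_right (Fin.le_iff_val_le_val.1 hab) : (b : ℕ)/s ≤ (a : ℕ)/s)
    (by exact Nat.not_le.2 h)

def contract {k : ℕ} {s m : ℕ} (S : Finset (Fin (s * m) × Fin (s * m))) : Finset (Fin m × Fin m) :=
  S.image fun p => (bIdx p.1, bIdx p.2)

lemma mContains_of_contract {k s m : ℕ} {Q : Equiv.Perm (Fin k)}
    {S : Finset (Fin (s * m) × Fin (s * m))}
    (hc : MContains Q (contract (k := k) S)) : MContains Q S := by
  obtain ⟨f, g, hf, hg, hm⟩ := hc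
  have H : ∀ i : Fin k, ∃ p, p ∈ S ∧ bIdx p.1 = f i ∧ bIdx p.2 = g (Q i) := by
    intro i
    obtain ⟨p, hp, hpe⟩ := Finset.mem_image.1 (hm i)
    exact ⟨p, hp, congrArg Prod.fst hpe, congrArg Prod.snd hpe⟩
  choose p hpS h1 h2 using H
  refine ⟨fun i => (p i).1, fun j => (p (Q⁻¹ j)).2, ?_, ?_, ?_⟩
  · intro i i' hii
    refine lt_of_bIdx_lt ?_
    rw [h1, h1]; exact hf hii
  · intro j j' hjj
    refine lt_of_bIdx_lt ?_
    rw [h2, h2]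
    simpa using hg hjj
  · intro i
    simp only [show Q⁻¹ (Q i) = i from Q.symm_apply_apply i]
    exact hpS i

def blockAt {s m : ℕ} (S : Finset (Fin (s * m) × Fin (s * m))) (b : Fin m × Fin m) :
    Finset (Fin (s * m) × Fin (s * m)) :=
  S.filter fun p => (bIdx p.1, bIdx p.2) = b

def colsAt {s m : ℕ} (S : Finset (Fin (s * m) × Fin (s * m))) (b : Fin m × Fin m) :
    Finset (Fin (s * m)) :=
  (blockAt S b).image Prod.snd

def rowsAt {s m : ℕ} (S : Finset (Fin (s * m) × Fin (s * m))) (b : Fin m × Fin m) :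
    Finset (Fin (s * m)) :=
  (blockAt S b).image Prod.fst

lemma card_blockAt_le {s m : ℕ} (S : Finset (Fin (s * m) × Fin (s * m))) (b : Fin m × Fin m) :
    (blockAt S b).card ≤ (rowsAt S b).card * (colsAt S b).card := by
  have hsub : blockAt S b ⊆ (rowsAt S b) ×ˢ (colsAt S b) := by
    intro p hp
    exact Finset.mem_product.2 ⟨Finset.mem_image_of_mem _ hp, Finset.mem_image_of_mem _ hp⟩
  simpa [Finset.card_product] using Finset.card_le_card hsub

/-- the set of coordinates with a given block index has at most `s` elements -/
lemma card_bIdx_fiber_le {s m : ℕ} (hs : 0 < s) (J : Fin m) :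
    ((univ : Finset (Fin (s * m))).filter fun r => bIdx r = J).card ≤ s := by
  have key : ((univ : Finset (Fin (s * m))).filter fun r => bIdx r = J).card
      ≤ (Finset.range s).card := by
    refine Finset.card_le_card_of_injOn (fun r => (r : ℕ) % s) (fun r hr => ?_) ?_
    · exact Finset.mem_range.2 (Nat.mod_lt _ hs)
    · intro a ha b hb hab
      simp only [Finset.coe_filter, Set.mem_setOf_eq] at ha hb
      have hdiv : (a : ℕ) / s = (b : ℕ) / s := by
        have h1 : ((a : ℕ) / s : ℕ) = (J : ℕ) := congrArg Fin.val ha.2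
        have h2 : ((b : ℕ) / s : ℕ) = (J : ℕ) := congrArg Fin.val hb.2
        omega
      have hab' : (a : ℕ) % s = (b : ℕ) % s := hab
      refine Fin.ext ?_
      have h3 : (a : ℕ) = s * ((a : ℕ) / s) + (a : ℕ) % s := (Nat.div_add_mod _ _).symm
      have h4 : (b : ℕ) = s * ((b : ℕ) / s) + (b : ℕ) % s := (Nat.div_add_mod _ _).symm
      rw [h3, h4, hdiv, hab']
  exact le_trans key (le_of_eq (Finset.card_range s))

lemma colsAt_subset_fiber {s m : ℕ} (S : Finset (Fin (s * m) × Fin (s * m))) (b : Fin m × Fin m) :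
    colsAt S b ⊆ (univ : Finset (Fin (s * m))).filter fun r => bIdx r = b.2 := by
  intro c hc
  obtain ⟨p, hp, hpe⟩ := Finset.mem_image.1 hc
  rw [blockAt, Finset.mem_filter] at hp
  subst hpe
  have h2 : bIdx p.2 = b.2 := congrArg Prod.snd hp.2
  simp [h2]

lemma card_colsAt_le {s m : ℕ} (hs : 0 < s) (S : Finset (Fin (s * m) × Fin (s * m)))
    (b : Fin m × Fin m) : (colsAt S b).card ≤ s :=
  le_trans (Finset.card_le_card (colsAt_subset_fiber S b)) (card_bIdx_fiber_le hs b.2)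

lemma wide_bound {k s m : ℕ} (Q : Equiv.Perm (Fin k)) (hk : 0 < k) (hs : 0 < s)
    {S : Finset (Fin (s * m) × Fin (s * m))} (hav : ¬ MContains Q S) (J : Fin m) :
    ((univ : Finset (Fin m)).filter fun I => k ≤ (colsAt S (I, J)).card).card
      ≤ (k - 1) * s.choose k := by
  by_contra hcon
  push_neg at hcon
  set W := (univ : Finset (Fin m)).filter fun I => k ≤ (colsAt S (I, J)).card with hW
  set fib := (univ : Finset (Fin (s * m))).filter fun r => bIdx r = J with hfib
  -- choose a k-subset of occupied columns for each wide block-row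
  have hch : ∀ I : Fin m, I ∈ W → ∃ t, t ⊆ colsAt S (I, J) ∧ t.card = k := by
    intro I hI
    rw [hW, Finset.mem_filter] at hI
    obtain ⟨t, ht, htc⟩ := Finset.exists_subset_card_eq hI.2
    exact ⟨t, ht, htc⟩
  classical
  let c : Fin m → Finset (Fin (s * m)) := fun I =>
    if h : I ∈ W then (hch I h).choose else ∅
  have hc1 : ∀ I ∈ W, c I ⊆ colsAt S (I, J) := by
    intro I hI; simp only [c, dif_pos hI]; exact (hch I hI).choose_spec.1
  have hc2 : ∀ I ∈ W, (c I).card = k := by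
    intro I hI; simp only [c, dif_pos hI]; exact (hch I hI).choose_spec.2
  have hmaps : ∀ I ∈ W, c I ∈ fib.powersetCard k := by
    intro I hI
    refine Finset.mem_powersetCard.2 ⟨?_, hc2 I hI⟩
    exact (hc1 I hI).trans (colsAt_subset_fiber S (I, J))
  have hcard : (fib.powersetCard k).card * (k - 1) < W.card := by
    have h1 : (fib.powersetCard k).card = fib.card.choose k := Finset.card_powersetCard k fib
    have h2 : fib.card.choose k ≤ s.choose k :=
      Nat.choose_le_choose k (card_bIdx_fiber_le hs J)
    calc (fib.powersetCard k).card * (k - 1) ≤ s.choose k * (k - 1) := by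
          rw [h1]; exact Nat.mul_le_mul_right _ h2
      _ = (k - 1) * s.choose k := Nat.mul_comm _ _
      _ < W.card := hcon
  obtain ⟨b, hbmem, hbfib⟩ := Finset.exists_lt_card_fiber_of_mul_lt_card_of_maps_to hmaps hcard
  -- k block-rows with the same chosen column set b
  obtain ⟨F, hFsub, hFcard⟩ := Finset.exists_subset_card_eq (by omega :
    k ≤ (W.filter fun I => c I = b).card)
  have hbk : b.card = k := (Finset.mem_powersetCard.1 hbmem).2
  let e := F.orderEmbOfFin hFcard
  let cb := b.orderEmbOfFin hbk
  have hbI : ∀ i : Fin k, b ⊆ colsAt S (e i, J) := by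
    intro i
    have hei : e i ∈ W.filter fun I => c I = b := hFsub (F.orderEmbOfFin_mem hFcard i)
    rw [Finset.mem_filter] at hei
    rw [← hei.2]
    exact hc1 _ hei.1
  have H : ∀ i : Fin k, ∃ p, p ∈ S ∧ bIdx p.1 = e i ∧ p.2 = cb (Q i) := by
    intro i
    have hcol : cb (Q i) ∈ colsAt S (e i, J) := hbI i (b.orderEmbOfFin_mem hbk (Q i))
    obtain ⟨p, hp, hpe⟩ := Finset.mem_image.1 hcol
    rw [blockAt, Finset.mem_filter] at hp
    exact ⟨p, hp.1, congrArg Prod.fst hp.2, hpe⟩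
  choose p hpS h1 h2 using H
  apply hav
  refine ⟨fun i => (p i).1, fun j => cb j, ?_, cb.strictMono, ?_⟩
  · intro i i' hii
    refine lt_of_bIdx_lt ?_
    rw [h1, h1]
    exact (F.orderEmbOfFin hFcard).strictMono hii
  · intro i
    have : ((p i).1, cb (Q i)) = p i := Prod.ext rfl (h2 i).symm
    rw [this]
    exact hpS i

lemma rowsAt_eq_colsAt_swap {s m : ℕ} (S : Finset (Fin (s * m) × Fin (s * m)))
    (I J : Fin m) : rowsAt S (I, J) = colsAt (S.image Prod.swap) (J, I) := by
  rw [rowsAt, colsAt]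
  have hb : blockAt (S.image Prod.swap) (J, I) = (blockAt S (I, J)).image Prod.swap := by
    rw [blockAt, blockAt]
    rw [Finset.filter_image]
    congr 1
    apply Finset.filter_congr
    intro p _
    constructor
    · intro h
      have h1 := congrArg Prod.fst h
      have h2 := congrArg Prod.snd h
      exact Prod.ext h2 h1
    · intro h
      have h1 := congrArg Prod.fst h
      have h2 := congrArg Prod.snd h
      exact Prod.ext h2 h1
  rw [hb, Finset.image_image]
  rfl

/-- the Füredi–Hajnal constant -/
def FHc (k : ℕ) : ℕ := 2 * (k - 1) * ((k ^ 2).choose k) * k ^ 4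

/-- Füredi–Hajnal: a matrix avoiding the pattern of a permutation of length `k ≥ 2` has a
linearly bounded number of entries. -/
theorem fh_bound {k : ℕ} (hk : 2 ≤ k) (Q : Equiv.Perm (Fin k)) :
    ∀ n : ℕ, ∀ S : Finset (Fin n × Fin n), ¬ MContains Q S → S.card ≤ FHc k * n := by
  have hCpos : 1 ≤ (k ^ 2).choose k :=
    Nat.choose_pos (by nlinarith : k ≤ k ^ 2)
  have hcge : k ^ 4 ≤ FHc k := by
    have h1 : 1 ≤ 2 * (k - 1) * ((k ^ 2).choose k) := by
      have : 1 ≤ k - 1 := by omega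
      nlinarith
    calc k ^ 4 = 1 * k ^ 4 := (Nat.one_mul _).symm
      _ ≤ 2 * (k - 1) * ((k ^ 2).choose k) * k ^ 4 := Nat.mul_le_mul_right _ h1
  intro n
  induction n using Nat.strong_induction_on with
  | _ n IH =>
    intro S hav
    by_cases hn : n ≤ k ^ 4
    · calc S.card ≤ (univ : Finset (Fin n × Fin n)).card := Finset.card_le_univ S
        _ = n * n := by simp [Fintype.card_prod]
        _ ≤ k ^ 4 * n := Nat.mul_le_mul_right n hn
        _ ≤ FHc k * n := Nat.mul_le_mul_right n hcge
    push_neg at hn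
    -- setup
    set s := k ^ 2 with hsdef
    have hs : 0 < s := by positivity
    set m := n / s + 1 with hmdef
    have hnm : n ≤ s * m := by
      have hd : n / s < m := by omega
      have := (Nat.div_lt_iff_lt_mul hs).1 hd
      rw [Nat.mul_comm]
      omega
    have hmn : m < n := by
      have h4 : 4 ≤ s := by
        have := Nat.pow_le_pow_left hk 2
        omega
      have h1 : n / s ≤ n / 4 := Nat.div_le_div_left h4 (by norm_num)
      have h2 : n / 4 * 4 ≤ n := Nat.div_mul_le_self n 4
      have h17 : 17 ≤ n := by
        have := Nat.pow_le_pow_left hk 4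
        omega
      omega
    set S' := S.image (castPair hnm) with hS'
    have hS'card : S'.card = S.card := Finset.card_image_of_injective S (castPair_injective hnm)
    have hav' : ¬ MContains Q S' := fun h => hav (mContains_of_image_castLE hnm h)
    set T := contract (k := k) S' with hT
    have hTav : ¬ MContains Q T := fun h => hav' (mContains_of_contract h)
    have hTcard : T.card ≤ FHc k * m := IH m hmn T hTav
    -- the transpose
    set S'' := S'.image Prod.swap with hS''
    have hav'' : ¬ MContains Q⁻¹ S'' := by
      intro h
      apply hav'
      have := mContains_swap h
      rwa [inv_inv, hS'', image_swap_swap] at this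
    -- decompose the count blockwise
    have hsum : S'.card = ∑ b ∈ T, (blockAt S' b).card := by
      refine Finset.card_eq_sum_card_fiberwise ?_
      intro p hp
      exact Finset.mem_image_of_mem _ hp
    have hblock : ∀ b : Fin m × Fin m, (blockAt S' b).card ≤
        (k - 1) * (k - 1) + (if k ≤ (colsAt S' b).card then s * s else 0)
          + (if k ≤ (rowsAt S' b).card then s * s else 0) := by
      intro b
      have hrc := card_blockAt_le S' b
      have hr : (rowsAt S' b).card ≤ s := by
        rw [rowsAt_eq_colsAt_swap S' b.1 b.2]
        exact card_colsAt_le hs _ _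
      have hc : (colsAt S' b).card ≤ s := card_colsAt_le hs S' b
      by_cases h1 : k ≤ (colsAt S' b).card
      · rw [if_pos h1]
        have : (blockAt S' b).card ≤ s * s := le_trans hrc (Nat.mul_le_mul hr hc)
        omega
      · by_cases h2 : k ≤ (rowsAt S' b).card
        · rw [if_neg h1, if_pos h2]
          have : (blockAt S' b).card ≤ s * s := le_trans hrc (Nat.mul_le_mul hr hc)
          omega
        · rw [if_neg h1, if_neg h2]
          push_neg at h1 h2
          have : (blockAt S' b).card ≤ (k - 1) * (k - 1) :=
            le_trans hrc (Nat.mul_le_mul (by omega) (by omega))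
          omega
    -- sum the per-block bounds
    have hwideC : ∀ J : Fin m,
        ((univ : Finset (Fin m)).filter fun I => k ≤ (colsAt S' (I, J)).card).card
          ≤ (k - 1) * s.choose k := wide_bound Q (by omega) hs hav'
    have hwideR : ∀ I : Fin m,
        ((univ : Finset (Fin m)).filter fun J => k ≤ (colsAt S'' (J, I)).card).card
          ≤ (k - 1) * s.choose k := wide_bound Q⁻¹ (by omega) hs hav''
    have hsum2 : ∑ b ∈ T, (blockAt S' b).card ≤
        (k - 1) * (k - 1) * T.card + 2 * ((k - 1) * s.choose k * (s * s)) * m := by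
      have step1 : ∑ b ∈ T, (blockAt S' b).card ≤
          ∑ b ∈ T, ((k - 1) * (k - 1) + (if k ≤ (colsAt S' b).card then s * s else 0)
            + (if k ≤ (rowsAt S' b).card then s * s else 0)) :=
        Finset.sum_le_sum fun b _ => hblock b
      have split : ∑ b ∈ T, ((k - 1) * (k - 1) + (if k ≤ (colsAt S' b).card then s * s else 0)
            + (if k ≤ (rowsAt S' b).card then s * s else 0))
          = T.card * ((k - 1) * (k - 1))
            + (∑ b ∈ T, if k ≤ (colsAt S' b).card then s * s else 0)
            + (∑ b ∈ T, if k ≤ (rowsAt S' b).card then s * s else 0) := by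
        rw [Finset.sum_add_distrib, Finset.sum_add_distrib, Finset.sum_const, smul_eq_mul]
      have hc1 : (∑ b ∈ T, if k ≤ (colsAt S' b).card then s * s else 0)
          ≤ (k - 1) * s.choose k * (s * s) * m := by
        calc (∑ b ∈ T, if k ≤ (colsAt S' b).card then s * s else 0)
            ≤ ∑ b : Fin m × Fin m, if k ≤ (colsAt S' b).card then s * s else 0 :=
              Finset.sum_le_sum_of_subset (Finset.subset_univ T)
          _ = ∑ J : Fin m, ∑ I : Fin m, if k ≤ (colsAt S' (I, J)).card then s * s else 0 :=
              Fintype.sum_prod_type_right _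
          _ ≤ ∑ _J : Fin m, (k - 1) * s.choose k * (s * s) := by
              refine Finset.sum_le_sum fun J _ => ?_
              calc (∑ I : Fin m, if k ≤ (colsAt S' (I, J)).card then s * s else 0)
                  = ((univ : Finset (Fin m)).filter
                      fun I => k ≤ (colsAt S' (I, J)).card).card * (s * s) := by
                    rw [← Finset.sum_filter, Finset.sum_const, smul_eq_mul]
                _ ≤ (k - 1) * s.choose k * (s * s) := Nat.mul_le_mul_right _ (hwideC J)
          _ = (k - 1) * s.choose k * (s * s) * m := by
              rw [Finset.sum_const, smul_eq_mul]
              simp [Nat.mul_comm]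
      have hc2 : (∑ b ∈ T, if k ≤ (rowsAt S' b).card then s * s else 0)
          ≤ (k - 1) * s.choose k * (s * s) * m := by
        have hrw : ∀ b : Fin m × Fin m, (if k ≤ (rowsAt S' b).card then s * s else 0)
            = (if k ≤ (colsAt S'' (b.2, b.1)).card then s * s else 0) := by
          intro b
          cases b with
          | mk I J => rw [rowsAt_eq_colsAt_swap S' I J]
        calc (∑ b ∈ T, if k ≤ (rowsAt S' b).card then s * s else 0)
            = ∑ b ∈ T, if k ≤ (colsAt S'' (b.2, b.1)).card then s * s else 0 :=
              Finset.sum_congr rfl fun b _ => hrw b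
          _ ≤ ∑ b : Fin m × Fin m, if k ≤ (colsAt S'' (b.2, b.1)).card then s * s else 0 :=
              Finset.sum_le_sum_of_subset (Finset.subset_univ T)
          _ = ∑ I : Fin m, ∑ J : Fin m, if k ≤ (colsAt S'' (J, I)).card then s * s else 0 :=
              Fintype.sum_prod_type _
          _ ≤ ∑ _I : Fin m, (k - 1) * s.choose k * (s * s) := by
              refine Finset.sum_le_sum fun I _ => ?_
              calc (∑ J : Fin m, if k ≤ (colsAt S'' (J, I)).card then s * s else 0)
                  = ((univ : Finset (Fin m)).filter
                      fun J => k ≤ (colsAt S'' (J, I)).card).card * (s * s) := by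
                    rw [← Finset.sum_filter, Finset.sum_const, smul_eq_mul]
                _ ≤ (k - 1) * s.choose k * (s * s) := Nat.mul_le_mul_right _ (hwideR I)
          _ = (k - 1) * s.choose k * (s * s) * m := by
              rw [Finset.sum_const, smul_eq_mul]
              simp [Nat.mul_comm]
      calc ∑ b ∈ T, (blockAt S' b).card
          ≤ T.card * ((k - 1) * (k - 1))
            + (∑ b ∈ T, if k ≤ (colsAt S' b).card then s * s else 0)
            + (∑ b ∈ T, if k ≤ (rowsAt S' b).card then s * s else 0) := le_trans step1 (le_of_eq split)
        _ ≤ T.card * ((k - 1) * (k - 1)) + (k - 1) * s.choose k * (s * s) * m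
            + (k - 1) * s.choose k * (s * s) * m := add_le_add (add_le_add le_rfl hc1) hc2
        _ = (k - 1) * (k - 1) * T.card + 2 * ((k - 1) * s.choose k * (s * s)) * m := by ring
    have hfinal : (k - 1) * (k - 1) * T.card + 2 * ((k - 1) * s.choose k * (s * s)) * m
        ≤ FHc k * n := by
      have hXF : 2 * ((k - 1) * s.choose k * (s * s)) = FHc k := by
        simp only [FHc, hsdef]
        ring
      have hq2 : n / s * s ≤ n := Nat.div_mul_le_self n s
      have hq1 : s ≤ n / s := by
        refine (Nat.le_div_iff_mul_le hs).2 ?_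
        have : s * s = k ^ 4 := by rw [hsdef]; ring
        omega
      have hmain : m * ((k - 1) * (k - 1) + 1) ≤ n := by
        have hE1 : 1 ≤ k - 1 := by omega
        set E := k - 1 with hEdef
        have hkE : k = E + 1 := by omega
        set q := n / s with hqdef
        have hsE : s = (E + 1) * (E + 1) := by rw [hsdef, hkE]; ring
        rw [hsE] at hq1 hq2
        have hm : m = q + 1 := hmdef
        rw [hm]
        nlinarith [hq1, hq2, hE1]
      calc (k - 1) * (k - 1) * T.card + 2 * ((k - 1) * s.choose k * (s * s)) * m
          ≤ (k - 1) * (k - 1) * (FHc k * m) + 2 * ((k - 1) * s.choose k * (s * s)) * m :=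
            add_le_add_left (Nat.mul_le_mul_left _ hTcard) _
        _ = FHc k * (m * ((k - 1) * (k - 1) + 1)) := by rw [hXF]; ring
        _ ≤ FHc k * n := Nat.mul_le_mul_left _ hmain
    calc S.card = S'.card := hS'card.symm
      _ = ∑ b ∈ T, (blockAt S' b).card := hsum
      _ ≤ _ := hsum2
      _ ≤ FHc k * n := hfinal

/-- number of `n × n` matrices avoiding `Q` -/
noncomputable def avM {k : ℕ} (Q : Equiv.Perm (Fin k)) (n : ℕ) : ℕ :=
  Nat.card {S : Finset (Fin n × Fin n) // ¬ MContains Q S}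

lemma avM_mono {k : ℕ} (Q : Equiv.Perm (Fin k)) {n n' : ℕ} (h : n ≤ n') :
    avM Q n ≤ avM Q n' := by
  refine Nat.card_le_card_of_injective
    (fun S => ⟨S.1.image (castPair h), fun hc => S.2 (mContains_of_image_castLE h hc)⟩) ?_
  intro S S' hSS
  have h2 : S.1.image (castPair h) = S'.1.image (castPair h) := congrArg Subtype.val hSS
  exact Subtype.ext (Finset.image_injective (castPair_injective h) h2)

/-- normalize a cell to its position within its `2 × 2` block -/
def dcell {n : ℕ} (q : Fin (2 * n) × Fin (2 * n)) : Fin 2 × Fin 2 :=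
  (⟨(q.1 : ℕ) % 2, Nat.mod_lt _ (by norm_num)⟩, ⟨(q.2 : ℕ) % 2, Nat.mod_lt _ (by norm_num)⟩)

lemma cell_mem_iff {k n : ℕ} (S : Finset (Fin (2 * n) × Fin (2 * n)))
    (p : Fin (2 * n) × Fin (2 * n)) :
    p ∈ S ↔ ∃ _h : (bIdx p.1, bIdx p.2) ∈ contract (k := k) S,
      dcell p ∈ (blockAt S (bIdx p.1, bIdx p.2)).image dcell := by
  constructor
  · intro hp
    refine ⟨Finset.mem_image_of_mem _ hp, Finset.mem_image_of_mem _ ?_⟩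
    rw [blockAt, Finset.mem_filter]
    exact ⟨hp, rfl⟩
  · rintro ⟨-, hd⟩
    obtain ⟨q, hq, hqd⟩ := Finset.mem_image.1 hd
    rw [blockAt, Finset.mem_filter] at hq
    have hb1 : (q.1 : ℕ) / 2 = (p.1 : ℕ) / 2 := congrArg (fun x : Fin _ => (x : ℕ)) (congrArg Prod.fst hq.2)
    have hb2 : (q.2 : ℕ) / 2 = (p.2 : ℕ) / 2 := congrArg (fun x : Fin _ => (x : ℕ)) (congrArg Prod.snd hq.2)
    have hm1 : (q.1 : ℕ) % 2 = (p.1 : ℕ) % 2 := congrArg (fun x : Fin _ => (x : ℕ)) (congrArg Prod.fst hqd)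
    have hm2 : (q.2 : ℕ) % 2 = (p.2 : ℕ) % 2 := congrArg (fun x : Fin _ => (x : ℕ)) (congrArg Prod.snd hqd)
    have e1 : q.1 = p.1 := by
      refine Fin.ext ?_
      have := Nat.div_add_mod (q.1 : ℕ) 2
      have := Nat.div_add_mod (p.1 : ℕ) 2
      omega
    have e2 : q.2 = p.2 := by
      refine Fin.ext ?_
      have := Nat.div_add_mod (q.2 : ℕ) 2
      have := Nat.div_add_mod (p.2 : ℕ) 2
      omega
    have : q = p := Prod.ext e1 e2
    rw [← this]
    exact hq.1

lemma avM_double {k : ℕ} (hk : 2 ≤ k) (Q : Equiv.Perm (Fin k)) (n : ℕ) :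
    avM Q (2 * n) ≤ avM Q n * 16 ^ (FHc k * n) := by
  classical
  let Tgt := Σ T : {T : Finset (Fin n × Fin n) // ¬ MContains Q T},
    ({p : Fin n × Fin n // p ∈ T.1} → Finset (Fin 2 × Fin 2))
  let Φ : {S : Finset (Fin (2 * n) × Fin (2 * n)) // ¬ MContains Q S} → Tgt :=
    fun S => ⟨⟨contract (k := k) S.1, fun h => S.2 (mContains_of_contract h)⟩,
      fun p => (blockAt S.1 p.1).image dcell⟩
  let recon : Tgt → Finset (Fin (2 * n) × Fin (2 * n)) := fun x =>
    (univ : Finset (Fin (2 * n) × Fin (2 * n))).filter fun p =>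
      ∃ h : (bIdx p.1, bIdx p.2) ∈ x.1.1, dcell p ∈ x.2 ⟨(bIdx p.1, bIdx p.2), h⟩
  have hrecon : ∀ S, recon (Φ S) = S.1 := by
    intro S
    ext p
    simp only [recon, Φ, Finset.mem_filter, Finset.mem_univ, true_and]
    exact (cell_mem_iff (k := k) S.1 p).symm
  have hinj : Function.Injective Φ := by
    intro S S' hSS
    have : S.1 = S'.1 := by rw [← hrecon S, ← hrecon S', hSS]
    exact Subtype.ext this
  have hcard : avM Q (2 * n) ≤ Nat.card Tgt := Nat.card_le_card_of_injective Φ hinj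
  have hTgt : Nat.card Tgt ≤ avM Q n * 16 ^ (FHc k * n) := by
    rw [Nat.card_eq_fintype_card, Fintype.card_sigma]
    have hbound : ∀ T : {T : Finset (Fin n × Fin n) // ¬ MContains Q T},
        Fintype.card ({p : Fin n × Fin n // p ∈ T.1} → Finset (Fin 2 × Fin 2))
          ≤ 16 ^ (FHc k * n) := by
      intro T
      rw [Fintype.card_fun, Fintype.card_coe]
      have h16 : Fintype.card (Finset (Fin 2 × Fin 2)) = 16 := by
        rw [Fintype.card_finset]
        simp
      rw [h16]
      exact Nat.pow_le_pow_right (by norm_num) (fh_bound hk Q n T.1 T.2)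
    calc (∑ T : {T : Finset (Fin n × Fin n) // ¬ MContains Q T},
            Fintype.card ({p : Fin n × Fin n // p ∈ T.1} → Finset (Fin 2 × Fin 2)))
        ≤ (univ : Finset {T : Finset (Fin n × Fin n) // ¬ MContains Q T}).card
            • 16 ^ (FHc k * n) :=
          Finset.sum_le_card_nsmul _ _ _ fun T _ => hbound T
      _ = avM Q n * 16 ^ (FHc k * n) := by
          rw [smul_eq_mul, Finset.card_univ, avM, Nat.card_eq_fintype_card]
  exact le_trans hcard hTgt

lemma avM_le_pow {k : ℕ} (hk : 2 ≤ k) (Q : Equiv.Perm (Fin k)) (n : ℕ) :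
    avM Q n ≤ (16 ^ (4 * (FHc k + 1))) ^ n := by
  have hpow2 : ∀ j : ℕ, avM Q (2 ^ j) ≤ 16 ^ ((FHc k + 1) * 2 ^ (j + 1)) := by
    intro j
    induction j with
    | zero =>
      have h1 : avM Q 1 ≤ Nat.card (Finset (Fin 1 × Fin 1)) :=
        Nat.card_le_card_of_injective Subtype.val Subtype.coe_injective
      have h2 : Nat.card (Finset (Fin 1 × Fin 1)) = 2 := by
        rw [Nat.card_eq_fintype_card, Fintype.card_finset]
        simp
      have h3 : (2 : ℕ) ≤ 16 ^ ((FHc k + 1) * 2 ^ (0 + 1)) := by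
        calc (2 : ℕ) ≤ 16 ^ 1 := by norm_num
          _ ≤ 16 ^ ((FHc k + 1) * 2 ^ (0 + 1)) :=
            Nat.pow_le_pow_right (by norm_num) (by omega)
      simpa [h2] using le_trans (by simpa using h1) h3
    | succ j IH =>
      have hstep : avM Q (2 ^ (j + 1)) ≤ avM Q (2 ^ j) * 16 ^ (FHc k * 2 ^ j) := by
        have : (2 : ℕ) ^ (j + 1) = 2 * 2 ^ j := by ring
        rw [this]
        exact avM_double hk Q (2 ^ j)
      calc avM Q (2 ^ (j + 1)) ≤ avM Q (2 ^ j) * 16 ^ (FHc k * 2 ^ j) := hstep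
        _ ≤ 16 ^ ((FHc k + 1) * 2 ^ (j + 1)) * 16 ^ (FHc k * 2 ^ j) :=
            Nat.mul_le_mul_right _ IH
        _ = 16 ^ ((FHc k + 1) * 2 ^ (j + 1) + FHc k * 2 ^ j) := (pow_add 16 _ _).symm
        _ ≤ 16 ^ ((FHc k + 1) * 2 ^ (j + 1 + 1)) := by
            refine Nat.pow_le_pow_right (by norm_num) ?_
            have e1 : (2 : ℕ) ^ (j + 1) = 2 * 2 ^ j := by ring
            have e2 : (2 : ℕ) ^ (j + 1 + 1) = 4 * 2 ^ j := by ring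
            rw [e1, e2]
            nlinarith [Nat.pow_pos (n := j) (show 0 < 2 by norm_num)]
  rcases Nat.eq_zero_or_pos n with hn | hn
  · subst hn
    have h1 : avM Q 0 ≤ Nat.card (Finset (Fin 0 × Fin 0)) :=
      Nat.card_le_card_of_injective Subtype.val Subtype.coe_injective
    have h2 : Nat.card (Finset (Fin 0 × Fin 0)) = 1 := by
      rw [Nat.card_eq_fintype_card, Fintype.card_finset]
      simp
    simpa [h2] using h1
  · set j := Nat.clog 2 n with hj
    have hle : n ≤ 2 ^ j := Nat.le_pow_clog (by norm_num) n
    have h2j : 2 ^ j ≤ 2 * n := by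
      rcases Nat.lt_or_ge n 2 with hn2 | hn2
      · interval_cases n
        · simp [hj, Nat.clog]
      · have hj1 : 1 ≤ j := by
          by_contra hcon
          push_neg at hcon
          interval_cases j
          omega
        have hlt : 2 ^ (j - 1) < n := by
          have := Nat.pow_pred_clog_lt_self (b := 2) (by norm_num) (x := n) hn2
          simpa [hj, Nat.pred_eq_sub_one] using this
        have : 2 ^ j = 2 * 2 ^ (j - 1) := by
          rw [← pow_succ']
          congr 1
          omega
        omega
    calc avM Q n ≤ avM Q (2 ^ j) := avM_mono Q hle
      _ ≤ 16 ^ ((FHc k + 1) * 2 ^ (j + 1)) := hpow2 j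
      _ ≤ 16 ^ ((FHc k + 1) * (4 * n)) := by
          refine Nat.pow_le_pow_right (by norm_num) ?_
          refine Nat.mul_le_mul_left _ ?_
          have : (2 : ℕ) ^ (j + 1) = 2 * 2 ^ j := by ring
          omega
      _ = (16 ^ (4 * (FHc k + 1))) ^ n := by
          rw [← pow_mul]
          ring_nf

section PermSide

set_option linter.deprecated false

/-- the permutation matrix of `π` -/
def permMatrix {n : ℕ} (π : Equiv.Perm (Fin n)) : Finset (Fin n × Fin n) :=
  univ.image fun i => (i, π i)

lemma mem_permMatrix {n : ℕ} (π : Equiv.Perm (Fin n)) (p : Fin n × Fin n) :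
    p ∈ permMatrix π ↔ π p.1 = p.2 := by
  simp only [permMatrix, Finset.mem_image, Finset.mem_univ, true_and]
  constructor
  · rintro ⟨i, rfl⟩
    rfl
  · intro h
    exact ⟨p.1, Prod.ext rfl h⟩

lemma permMatrix_injective {n : ℕ} : Function.Injective (permMatrix (n := n)) := by
  intro π π' h
  refine Equiv.ext fun i => ?_
  have h1 : (i, π i) ∈ permMatrix π' := by
    rw [← h, mem_permMatrix]
  exact ((mem_permMatrix π' (i, π i)).1 h1).symm

lemma contains_iff_mContains {n k : ℕ} (π : Equiv.Perm (Fin n)) (β : Equiv.Perm (Fin k)) :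
    Contains π β ↔ MContains β (permMatrix π) := by
  constructor
  · rintro ⟨f, hf, hiff⟩
    refine ⟨f, fun j => π (f (β⁻¹ j)), hf, ?_, ?_⟩
    · intro j j' hjj
      rw [← (hiff (β⁻¹ j) (β⁻¹ j'))]
      simpa using hjj
    · intro i
      rw [mem_permMatrix]
      simp
  · rintro ⟨f, g, hf, hg, hm⟩
    refine ⟨f, hf, fun i j => ?_⟩
    have hmi : π (f i) = g (β i) := (mem_permMatrix π _).1 (hm i)
    have hmj : π (f j) = g (β j) := (mem_permMatrix π _).1 (hm j)
    rw [hmi, hmj]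
    exact (hg.lt_iff_lt).symm

lemma contains_of_len0 {n : ℕ} (π : Equiv.Perm (Fin n)) (β : Equiv.Perm (Fin 0)) :
    Contains π β :=
  ⟨Fin.elim0, fun i => i.elim0, fun i => i.elim0⟩

lemma contains_of_len1 {n : ℕ} (hn : 1 ≤ n) (π : Equiv.Perm (Fin n))
    (β : Equiv.Perm (Fin 1)) : Contains π β := by
  refine ⟨fun _ => ⟨0, hn⟩, fun i j hij => absurd hij ?_, fun i j => ?_⟩
  · rw [Subsingleton.elim i j]
    exact lt_irrefl j
  · rw [Subsingleton.elim i j]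
    simp

-- basic facts about `directSum`
lemma directSum_castAdd {m n : ℕ} (σ : Equiv.Perm (Fin m)) (τ : Equiv.Perm (Fin n)) (i : Fin m) :
    directSum σ τ (Fin.castAdd n i) = Fin.castAdd n (σ i) := by
  simp [directSum]

lemma directSum_natAdd {m n : ℕ} (σ : Equiv.Perm (Fin m)) (τ : Equiv.Perm (Fin n)) (i : Fin n) :
    directSum σ τ (Fin.natAdd m i) = Fin.natAdd m (τ i) := by
  simp [directSum]

lemma directSum_val {m n : ℕ} (σ : Equiv.Perm (Fin m)) (τ : Equiv.Perm (Fin n))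
    (x : Fin (m + n)) :
    ((directSum σ τ x : Fin (m + n)) : ℕ) =
      if h : (x : ℕ) < m then (σ ⟨(x : ℕ), h⟩ : ℕ)
      else m + (τ ⟨(x : ℕ) - m, by omega⟩ : ℕ) := by
  by_cases h : (x : ℕ) < m
  · rw [dif_pos h]
    have hx : x = Fin.castAdd n ⟨(x : ℕ), h⟩ := Fin.ext rfl
    conv_lhs => rw [hx, directSum_castAdd]
    rfl
  · rw [dif_neg h]
    have hx : x = Fin.natAdd m ⟨(x : ℕ) - m, by omega⟩ := Fin.ext (by simp; omega)
    conv_lhs => rw [hx, directSum_natAdd]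
    rfl

lemma isInvolution_directSum {m n : ℕ} {π : Equiv.Perm (Fin m)} {τ : Equiv.Perm (Fin n)}
    (hπ : IsInvolution π) (hτ : IsInvolution τ) : IsInvolution (directSum π τ) := by
  have h1 : ∀ i, π (π i) = i := by
    intro i
    nth_rewrite 1 [← hπ]
    exact π.symm_apply_apply i
  have h2 : ∀ i, τ (τ i) = i := by
    intro i
    nth_rewrite 1 [← hτ]
    exact τ.symm_apply_apply i
  rw [IsInvolution, inv_eq_iff_mul_eq_one]
  refine Equiv.ext fun x => ?_
  rw [Equiv.Perm.mul_apply]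
  induction x using Fin.addCases with
  | left i => rw [directSum_castAdd, directSum_castAdd, h1]; rfl
  | right j => rw [directSum_natAdd, directSum_natAdd, h2]; rfl

lemma directSum_inj {m n : ℕ} {π π' : Equiv.Perm (Fin m)} {τ τ' : Equiv.Perm (Fin n)}
    (h : directSum π τ = directSum π' τ') : π = π' ∧ τ = τ' := by
  constructor
  · refine Equiv.ext fun i => ?_
    have := congrArg (fun e : Equiv.Perm (Fin (m + n)) => e (Fin.castAdd n i)) h
    simp only [directSum_castAdd] at this
    have hv : m + 0 + (π i : ℕ) = m + 0 + (π' i : ℕ) := by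
      have := congrArg Fin.val this
      simpa using this
    exact Fin.ext (by omega)
  · refine Equiv.ext fun j => ?_
    have := congrArg (fun e : Equiv.Perm (Fin (m + n)) => e (Fin.natAdd m j)) h
    simp only [directSum_natAdd] at this
    have hv : m + (τ j : ℕ) = m + (τ' j : ℕ) := by
      have := congrArg Fin.val this
      simpa using this
    exact Fin.ext (by omega)

lemma card_filter_val_lt {b : ℕ} (c : ℕ) (hcb : c ≤ b) :
    ((univ : Finset (Fin b)).filter fun v : Fin b => (v : ℕ) < c).card = c := by
  have he : ((univ : Finset (Fin b)).filter fun v : Fin b => (v : ℕ) < c)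
      = Finset.map (Fin.castLEEmb hcb) univ := by
    ext v
    rw [Finset.mem_filter, Finset.mem_map]
    constructor
    · intro hv
      exact ⟨⟨(v : ℕ), hv.2⟩, Finset.mem_univ _, Fin.ext rfl⟩
    · rintro ⟨u, -, rfl⟩
      exact ⟨Finset.mem_univ _, u.2⟩
  rw [he, Finset.card_map, Finset.card_univ, Fintype.card_fin]

lemma not_contains_directSum {m n b : ℕ} {β : Equiv.Perm (Fin b)}
    (hβ : ¬ SumDecomposable β) {π : Equiv.Perm (Fin m)} {τ : Equiv.Perm (Fin n)}
    (hπ : ¬ Contains π β) (hτ : ¬ Contains τ β) : ¬ Contains (directSum π τ) β := by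
  rintro ⟨f, hf, hiff⟩
  by_cases hall : ∀ i, (f i : ℕ) < m
  · apply hπ
    refine ⟨fun i => ⟨(f i : ℕ), hall i⟩, fun i j hij => hf hij, fun i j => ?_⟩
    have key : ∀ i, ((directSum π τ) (f i) : ℕ) = (π ⟨(f i : ℕ), hall i⟩ : ℕ) := by
      intro i
      rw [directSum_val, dif_pos (hall i)]
    rw [hiff i j, Fin.lt_def, Fin.lt_def, key i, key j]
  · by_cases hall2 : ∀ i, m ≤ (f i : ℕ)
    · apply hτ
      have hbnd : ∀ i : Fin b, (f i : ℕ) - m < n := fun i => by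
        have := (f i).2
        have := hall2 i
        omega
      refine ⟨fun i => ⟨(f i : ℕ) - m, hbnd i⟩, fun i j hij => ?_, fun i j => ?_⟩
      · have h1 : (f i : ℕ) < f j := hf hij
        have := hall2 i
        exact Fin.mk_lt_mk.2 (by omega)
      · have key : ∀ i, ((directSum π τ) (f i) : ℕ)
            = m + (τ ⟨(f i : ℕ) - m, hbnd i⟩ : ℕ) := by
          intro i
          rw [directSum_val, dif_neg (by have := hall2 i; omega)]
        show β i < β j ↔ τ ⟨(f i : ℕ) - m, hbnd i⟩ < τ ⟨(f j : ℕ) - m, hbnd j⟩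
        rw [hiff i j, Fin.lt_def, Fin.lt_def, key i, key j]
        omega
    · push_neg at hall hall2
      obtain ⟨j0, hj0⟩ := hall
      obtain ⟨i0, hi0⟩ := hall2
      exfalso
      apply hβ
      -- the split point
      set P := (univ : Finset (Fin b)).filter fun i => m ≤ (f i : ℕ) with hPdef
      have hPne : P.Nonempty := ⟨j0, by simp [hPdef, hj0]⟩
      set jstar := P.min' hPne with hjstar
      set a := (jstar : ℕ) with hadef
      have hjP : m ≤ (f jstar : ℕ) := (Finset.mem_filter.1 (P.min'_mem hPne)).2
      have hlow : ∀ i : Fin b, (i : ℕ) < a → (f i : ℕ) < m := by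
        intro i hi
        by_contra hcon
        push_neg at hcon
        have h1 : jstar ≤ i := P.min'_le i (Finset.mem_filter.2 ⟨Finset.mem_univ _, hcon⟩)
        rw [Fin.le_def] at h1
        omega
      have hhigh : ∀ i : Fin b, a ≤ (i : ℕ) → m ≤ (f i : ℕ) := by
        intro i hi
        have h1 : jstar ≤ i := Fin.le_def.2 hi
        calc m ≤ (f jstar : ℕ) := hjP
          _ ≤ (f i : ℕ) := Fin.le_def.1 (hf.monotone h1)
      have h0a : 0 < a := by
        by_contra hcon
        push_neg at hcon
        have := hhigh i0 (by omega)
        omega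
      have hab : a < b := jstar.2
      have hamb : a ≤ b := le_of_lt hab
      -- the values split accordingly
      have hsplit : ∀ i j : Fin b, (i : ℕ) < a → a ≤ (j : ℕ) → β i < β j := by
        intro i j hi hj
        rw [hiff i j, Fin.lt_def, directSum_val, directSum_val,
          dif_pos (hlow i hi), dif_neg (by have := hhigh j hj; omega)]
        have := (π ⟨(f i : ℕ), hlow i hi⟩).2
        omega
      -- β preserves the initial segment
      have hfull := Finset.card_filter_add_card_filter_not
        (s := (univ : Finset (Fin b))) (p := fun v : Fin b => (v : ℕ) < a)
      rw [card_filter_val_lt a hamb, Finset.card_univ, Fintype.card_fin] at hfull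
      have hgecard : ((univ : Finset (Fin b)).filter fun v : Fin b => ¬ (v : ℕ) < a).card = b - a := by omega
      have h1 : ∀ i : Fin b, (i : ℕ) < a → (β i : ℕ) < a := by
        intro i hi
        by_contra hcon
        push_neg at hcon
        set G := insert (β i) (((univ : Finset (Fin b)).filter fun j : Fin b => ¬ (j : ℕ) < a).image β) with hG
        have hGsub : G ⊆ (univ : Finset (Fin b)).filter fun v : Fin b => ¬ (v : ℕ) < a := by
          intro v hv
          rw [hG, Finset.mem_insert] at hv
          rw [Finset.mem_filter]
          refine ⟨Finset.mem_univ _, ?_⟩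
          rcases hv with rfl | hv
          · omega
          · obtain ⟨j, hj, rfl⟩ := Finset.mem_image.1 hv
            rw [Finset.mem_filter] at hj
            have := hsplit i j hi (by omega)
            rw [Fin.lt_def] at this
            omega
        have hnotmem : β i ∉ ((univ : Finset (Fin b)).filter fun j : Fin b => ¬ (j : ℕ) < a).image β := by
          intro hmem
          obtain ⟨j, hj, hje⟩ := Finset.mem_image.1 hmem
          rw [Finset.mem_filter] at hj
          have : j = i := β.injective hje
          omega
        have hGcard : G.card = 1 + (b - a) := by
          rw [hG, Finset.card_insert_of_notMem hnotmem,
            Finset.card_image_of_injective _ β.injective, hgecard]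
          omega
        have := Finset.card_le_card hGsub
        rw [hGcard, hgecard] at this
        omega
      have h2 : ∀ j : Fin b, a ≤ (j : ℕ) → a ≤ (β j : ℕ) := by
        intro j hj
        by_contra hcon
        push_neg at hcon
        set G := insert (β j) (((univ : Finset (Fin b)).filter fun i : Fin b => (i : ℕ) < a).image β) with hG
        have hGsub : G ⊆ (univ : Finset (Fin b)).filter fun v : Fin b => (v : ℕ) < a := by
          intro v hv
          rw [hG, Finset.mem_insert] at hv
          rw [Finset.mem_filter]
          refine ⟨Finset.mem_univ _, ?_⟩
          rcases hv with rfl | hv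
          · omega
          · obtain ⟨i, hi, rfl⟩ := Finset.mem_image.1 hv
            rw [Finset.mem_filter] at hi
            exact h1 i hi.2
        have hnotmem : β j ∉ (((univ : Finset (Fin b)).filter fun i : Fin b => (i : ℕ) < a).image β) := by
          intro hmem
          obtain ⟨i, hi, hie⟩ := Finset.mem_image.1 hmem
          rw [Finset.mem_filter] at hi
          have : i = j := β.injective hie
          omega
        have hGcard : G.card = 1 + a := by
          rw [hG, Finset.card_insert_of_notMem hnotmem,
            Finset.card_image_of_injective _ β.injective, card_filter_val_lt a hamb]
          omega
        have := Finset.card_le_card hGsub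
        rw [hGcard, card_filter_val_lt a hamb] at this
        omega
      -- build the two component permutations
      have hσinj : Function.Injective
          (fun i : Fin a => (⟨(β (Fin.castLE hamb i) : ℕ), h1 _ i.2⟩ : Fin a)) := by
        intro i i' hii
        have hv0 := congrArg Fin.val hii
        have hv : (β (Fin.castLE hamb i) : ℕ) = (β (Fin.castLE hamb i') : ℕ) := hv0
        have := β.injective (Fin.ext hv)
        have hv2 := congrArg Fin.val this
        exact Fin.ext hv2
      set σ : Equiv.Perm (Fin a) := Equiv.ofBijective _
        (Finite.injective_iff_bijective.1 hσinj) with hσ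
      have hτbnd : ∀ j : Fin (b - a), (β ⟨a + (j : ℕ), by omega⟩ : ℕ) - a < b - a := by
        intro j
        have hge := h2 ⟨a + (j : ℕ), by omega⟩ (by simp)
        have := (β ⟨a + (j : ℕ), by omega⟩).2
        omega
      have hτinj : Function.Injective
          (fun j : Fin (b - a) =>
            (⟨(β ⟨a + (j : ℕ), by omega⟩ : ℕ) - a, hτbnd j⟩ : Fin (b - a))) := by
        intro j j' hjj
        have hv0 := congrArg Fin.val hjj
        have hv : (β ⟨a + (j : ℕ), by omega⟩ : ℕ) - a
            = (β ⟨a + (j' : ℕ), by omega⟩ : ℕ) - a := hv0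
        have hge := h2 ⟨a + (j : ℕ), by omega⟩ (by simp)
        have hge' := h2 ⟨a + (j' : ℕ), by omega⟩ (by simp)
        have hbv : (β ⟨a + (j : ℕ), by omega⟩ : ℕ) = (β ⟨a + (j' : ℕ), by omega⟩ : ℕ) := by omega
        have := β.injective (Fin.ext hbv)
        have hval : a + (j : ℕ) = a + (j' : ℕ) := congrArg Fin.val this
        exact Fin.ext (by omega)
      set τ' : Equiv.Perm (Fin (b - a)) := Equiv.ofBijective _
        (Finite.injective_iff_bijective.1 hτinj) with hτ'
      have hba : a + (b - a) = b := by omega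
      refine ⟨a, b - a, hba, h0a, by omega, σ, τ', ?_⟩
      refine Equiv.ext fun x => Fin.ext ?_
      set y : Fin (a + (b - a)) := (finCongr hba).symm x with hy
      have hyx : (y : ℕ) = (x : ℕ) := rfl
      have h0 : (((finCongr hba).permCongr (directSum σ τ')) x : ℕ)
          = ((directSum σ τ') y : ℕ) := rfl
      have hval := directSum_val σ τ' y
      by_cases hx : (y : ℕ) < a
      · rw [dif_pos hx] at hval
        have hσx : ∀ (hpf : (y : ℕ) < a),
            (σ ⟨(y : ℕ), hpf⟩ : ℕ) = (β (Fin.castLE hamb ⟨(y : ℕ), hpf⟩) : ℕ) := fun _ => rfl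
        rw [hσx] at hval
        have hxx : ∀ (hpf : (y : ℕ) < a), Fin.castLE hamb ⟨(y : ℕ), hpf⟩ = x :=
          fun _ => Fin.ext hyx
        rw [hxx] at hval
        omega
      · rw [dif_neg hx] at hval
        push_neg at hx
        have hτx : ∀ (hpf : (y : ℕ) - a < b - a),
            (τ' ⟨(y : ℕ) - a, hpf⟩ : ℕ)
              = (β ⟨a + ((y : ℕ) - a), by omega⟩ : ℕ) - a := fun _ => rfl
        rw [hτx] at hval
        have hxx : (⟨a + ((y : ℕ) - a), by omega⟩ : Fin b) = x := by
          refine Fin.ext ?_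
          show a + ((y : ℕ) - a) = (x : ℕ)
          omega
        rw [hxx] at hval
        have hge := h2 x (by omega)
        omega

lemma identity_sumDecomposable {b : ℕ} (hb : 2 ≤ b) :
    SumDecomposable (1 : Equiv.Perm (Fin b)) := by
  have hba : 1 + (b - 1) = b := by omega
  refine ⟨1, b - 1, hba, one_pos, by omega, 1, 1, ?_⟩
  refine Equiv.ext fun x => Fin.ext ?_
  set y : Fin (1 + (b - 1)) := (finCongr hba).symm x with hy
  have hyx : (y : ℕ) = (x : ℕ) := rfl
  have h0 : (((finCongr hba).permCongr (directSum (1 : Equiv.Perm (Fin 1))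
      (1 : Equiv.Perm (Fin (b - 1))))) x : ℕ)
      = ((directSum (1 : Equiv.Perm (Fin 1)) (1 : Equiv.Perm (Fin (b - 1)))) y : ℕ) := rfl
  have hval := directSum_val (1 : Equiv.Perm (Fin 1)) (1 : Equiv.Perm (Fin (b - 1))) y
  have hgl : ((1 : Equiv.Perm (Fin b)) x : ℕ) = (x : ℕ) := rfl
  by_cases hx : (y : ℕ) < 1
  · rw [dif_pos hx] at hval
    simp only [Equiv.Perm.one_apply] at hval
    omega
  · rw [dif_neg hx] at hval
    simp only [Equiv.Perm.one_apply] at hval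
    omega

lemma id_not_contains {b n : ℕ} (hb : 2 ≤ b) {β : Equiv.Perm (Fin b)}
    (hβ : ¬ SumDecomposable β) : ¬ Contains (1 : Equiv.Perm (Fin n)) β := by
  rintro ⟨f, hf, hiff⟩
  apply hβ
  have hsm : StrictMono β := by
    intro i j hij
    rw [hiff i j]
    simp only [Equiv.Perm.one_apply]
    exact hf hij
  have key := (StrictMono.range_inj hsm (strictMono_id (α := Fin b))).1 ?_
  · have : β = 1 := Equiv.ext fun x => congrFun key x
    rw [this]
    exact identity_sumDecomposable hb
  · rw [Set.range_id, Set.range_eq_univ]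
    exact β.surjective

end PermSide

section Final

lemma avICountSet_supermult (B : Set ((k : ℕ) × Equiv.Perm (Fin k)))
    (hB : ∀ β ∈ B, ¬ SumDecomposable β.2) (m n : ℕ) :
    avICountSet B m * avICountSet B n ≤ avICountSet B (m + n) := by
  rw [avICountSet, avICountSet, avICountSet, ← Nat.card_prod]
  refine Nat.card_le_card_of_injective
    (fun x => ⟨directSum x.1.1 x.2.1, isInvolution_directSum x.1.2.1 x.2.2.1,
      fun β hβ => not_contains_directSum (hB β hβ) (x.1.2.2 β hβ) (x.2.2.2 β hβ)⟩) ?_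
  rintro x x' h
  have h2 := directSum_inj (congrArg Subtype.val h)
  exact Prod.ext (Subtype.ext h2.1) (Subtype.ext h2.2)

lemma avICountSet_pos (B : Set ((k : ℕ) × Equiv.Perm (Fin k)))
    (hB2 : ∀ β ∈ B, 2 ≤ β.1) (hBd : ∀ β ∈ B, ¬ SumDecomposable β.2) (n : ℕ) :
    1 ≤ avICountSet B n := by
  have : Nonempty {π : Equiv.Perm (Fin n) // IsInvolution π ∧ ∀ β ∈ B, ¬ Contains π β.2} :=
    ⟨⟨1, by rw [IsInvolution]; exact inv_one,
      fun β hβ => id_not_contains (hB2 β hβ) (hBd β hβ)⟩⟩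
  rw [avICountSet]
  exact Nat.card_pos

lemma avICountSet_le_avM (B : Set ((k : ℕ) × Equiv.Perm (Fin k)))
    (β₀ : (k : ℕ) × Equiv.Perm (Fin k)) (hβ₀ : β₀ ∈ B) (n : ℕ) :
    avICountSet B n ≤ avM β₀.2 n := by
  rw [avICountSet, avM]
  refine Nat.card_le_card_of_injective
    (fun π => ⟨permMatrix π.1,
      fun hc => π.2.2 β₀ hβ₀ ((contains_iff_mContains π.1 β₀.2).2 hc)⟩) ?_
  rintro π π' h
  exact Subtype.ext (permMatrix_injective (congrArg Subtype.val h))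

open Filter in
lemma growth_of_supermult (a : ℕ → ℕ) (K : ℕ) (hK : 1 ≤ K) (h1 : ∀ n, 1 ≤ a n)
    (hsup : ∀ m n, a m * a n ≤ a (m + n)) (hub : ∀ n, a n ≤ K ^ n) :
    ∃ L : ℝ, Filter.Tendsto (fun n : ℕ => (a n : ℝ) ^ ((n : ℝ)⁻¹))
      Filter.atTop (nhds L) := by
  have hapos : ∀ n, (0 : ℝ) < (a n : ℝ) := fun n => by
    have := h1 n
    exact_mod_cast Nat.lt_of_lt_of_le Nat.zero_lt_one this
  set u : ℕ → ℝ := fun n => -Real.log (a n) with hu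
  have hsubadd : Subadditive u := by
    intro p q
    have hlog : Real.log (a p) + Real.log (a q) ≤ Real.log (a (p + q)) := by
      rw [← Real.log_mul (ne_of_gt (hapos p)) (ne_of_gt (hapos q))]
      refine Real.log_le_log (mul_pos (hapos p) (hapos q)) ?_
      have := hsup p q
      exact_mod_cast this
    simp only [hu]
    linarith
  have hbdd : BddBelow (Set.range fun n : ℕ => u n / n) := by
    refine ⟨-Real.log K, ?_⟩
    rintro x ⟨n, rfl⟩
    simp only
    have hlogK : 0 ≤ Real.log K := Real.log_nonneg (by exact_mod_cast hK)
    rcases Nat.eq_zero_or_pos n with rfl | hn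
    · simp only [Nat.cast_zero, div_zero]
      linarith
    · have hnR : (0:ℝ) < (n : ℝ) := by exact_mod_cast hn
      rw [le_div_iff₀ hnR]
      have hlog : Real.log (a n) ≤ (n : ℝ) * Real.log K := by
        calc Real.log (a n) ≤ Real.log ((K : ℝ) ^ (n : ℕ)) :=
            Real.log_le_log (hapos n) (by exact_mod_cast hub n)
          _ = (n : ℝ) * Real.log K := by rw [Real.log_pow]
      simp only [hu]
      nlinarith
  have hlim := hsubadd.tendsto_lim hbdd
  refine ⟨Real.exp (-hsubadd.lim), ?_⟩
  have hcont : Filter.Tendsto (fun x : ℝ => Real.exp (-x)) (nhds hsubadd.lim)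
      (nhds (Real.exp (-hsubadd.lim))) :=
    (Real.continuous_exp.comp continuous_neg).continuousAt
  have hcomp := hcont.comp hlim
  refine Filter.Tendsto.congr' ?_ hcomp
  filter_upwards [Filter.eventually_ge_atTop 1] with n hn
  show Real.exp (-(u n / (n : ℝ))) = (a n : ℝ) ^ ((n : ℝ)⁻¹)
  rw [Real.rpow_def_of_pos (hapos n)]
  congr 1
  simp only [hu, neg_div, neg_neg, div_eq_mul_inv, neg_mul]

end Final

end AvGR


/-- If every permutation in the nonempty set `B` is sum indecomposable, then the set of
involutions avoiding every element of `B` has a proper (finite) growth rate. -/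
theorem avI_growth_rate_exists (B : Set ((k : ℕ) × Equiv.Perm (Fin k)))
    (hne : B.Nonempty) (hB : ∀ β ∈ B, ¬ SumDecomposable β.2) :
    ∃ L : ℝ, Filter.Tendsto (fun n : ℕ => (avICountSet B n : ℝ) ^ ((n : ℝ)⁻¹))
      Filter.atTop (nhds L) := by
  classical
  by_cases hshort : ∃ β ∈ B, β.1 ≤ 1
  · refine ⟨0, ?_⟩
    have hz : ∀ n : ℕ, 1 ≤ n → avICountSet B n = 0 := by
      intro n hn
      rw [avICountSet, Nat.card_eq_zero]
      left
      rw [isEmpty_iff]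
      rintro ⟨π, hπinv, hπav⟩
      obtain ⟨β, hβB, hβ1⟩ := hshort
      obtain ⟨kk, p⟩ := β
      have hkk : kk ≤ 1 := hβ1
      interval_cases kk
      · exact hπav ⟨0, p⟩ hβB (AvGR.contains_of_len0 π p)
      · exact hπav ⟨1, p⟩ hβB (AvGR.contains_of_len1 hn π p)
    refine Filter.Tendsto.congr' ?_ (tendsto_const_nhds (x := (0 : ℝ)))
    filter_upwards [Filter.eventually_ge_atTop 1] with n hn
    rw [hz n hn]
    rw [Nat.cast_zero, Real.zero_rpow]
    refine inv_ne_zero ?_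
    have : (0 : ℕ) < n := hn
    exact_mod_cast this.ne'
  · push_neg at hshort
    obtain ⟨β₀, hβ₀⟩ := hne
    have hk2 : 2 ≤ β₀.1 := hshort β₀ hβ₀
    refine AvGR.growth_of_supermult (avICountSet B) (16 ^ (4 * (AvGR.FHc β₀.1 + 1)))
      (Nat.one_le_pow _ _ (by norm_num)) (fun n => AvGR.avICountSet_pos B hshort hB n)
      (AvGR.avICountSet_supermult B hB) ?_
    intro n
    calc avICountSet B n ≤ AvGR.avM β₀.2 n := AvGR.avICountSet_le_avM B β₀ hβ₀ n
      _ ≤ (16 ^ (4 * (AvGR.FHc β₀.1 + 1))) ^ n := AvGR.avM_le_pow hk2 β₀.2 n
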